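/- Let V be a finite-dimensional real inner product space, φ an alternating p-form of comass one on V, X ⊆ V open, K ⊆ X a nonempty compact set, and x ∈ X. Then x ∉ K̂ if and only if there exists f ∈ PSH(X,φ) with f ≥ 0 on X, f identically zero on some neighborhood of K, and f(x) > 0. (Lemma 4.2, Euclidean case) -/

import Mathlib

open scoped RealInnerProductSpace
open intervalIntegral Real

noncomputable section

variable {V : Type*} [NormedAddCommGroup V] [InnerProductSpace ℝ V] [FiniteDimensional ℝ V]

/-- `f` is `φ`-plurisubharmonic on `U`: `Σ_j D²f(x)(e_j,e_j) ≥ 0` for every `x ∈ U` and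
every `φ`-plane `(e₁,…,e_p)` (an orthonormal `p`-tuple with `φ(e₁,…,e_p) = 1`). -/
def IsPSH {p : ℕ} (φ : V [⋀^Fin p]→ₗ[ℝ] ℝ) (U : Set V) (f : V → ℝ) : Prop :=
  ∀ x ∈ U, ∀ e : Fin p → V, Orthonormal ℝ e → φ e = 1 →
    0 ≤ ∑ j, iteratedFDeriv ℝ 2 f x ![e j, e j]

/-- The `(X,φ)`-convex hull of `K`:
`K̂ = {x ∈ X : f(x) ≤ sup_K f for all f ∈ PSH(X,φ)}`, where `PSH(X,φ)` is the set of
smooth `φ`-plurisubharmonic functions on `X`. -/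
def pshHull {p : ℕ} (φ : V [⋀^Fin p]→ₗ[ℝ] ℝ) (X K : Set V) : Set V :=
  {x ∈ X | ∀ f : V → ℝ, ContDiffOn ℝ (⊤ : ℕ∞) f X → IsPSH φ X f → f x ≤ sSup (f '' K)}

/-- Lemma 4.2 (Euclidean case): for a compact `K ⊆ X` and `x ∈ X`, `x ∉ K̂` if and only if
there is a smooth nonnegative `φ`-plurisubharmonic function `f` on `X` which vanishes
identically on a neighborhood of `K` and has `f(x) > 0`. -/

private def sigmaFun : ℝ → ℝ := fun s => ∫ u in (0:ℝ)..s, Real.smoothTransition u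

private def chiFun : ℝ → ℝ := fun t => ∫ s in (0:ℝ)..t, sigmaFun s

private lemma sigma_hasDerivAt (s : ℝ) : HasDerivAt sigmaFun (Real.smoothTransition s) s :=
  (Real.smoothTransition.continuous.integral_hasStrictDerivAt 0 s).hasDerivAt

private lemma sigma_continuous : Continuous sigmaFun :=
  Differentiable.continuous (fun s => (sigma_hasDerivAt s).differentiableAt)

private lemma chi_hasDerivAt (t : ℝ) : HasDerivAt chiFun (sigmaFun t) t :=
  (sigma_continuous.integral_hasStrictDerivAt 0 t).hasDerivAt

private lemma sigma_zero_of_nonpos {s : ℝ} (hs : s ≤ 0) : sigmaFun s = 0 := by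
  unfold sigmaFun
  rw [intervalIntegral.integral_symm]
  have : Set.EqOn Real.smoothTransition (fun _ => (0:ℝ)) (Set.uIcc s 0) := by
    intro u hu
    rw [Set.uIcc_of_le hs] at hu
    exact Real.smoothTransition.zero_of_nonpos hu.2
  rw [intervalIntegral.integral_congr this, intervalIntegral.integral_zero, neg_zero]

private lemma sigma_nonneg (s : ℝ) : 0 ≤ sigmaFun s := by
  rcases le_or_gt s 0 with h | h
  · rw [sigma_zero_of_nonpos h]
  · exact intervalIntegral.integral_nonneg h.le fun u _ => Real.smoothTransition.nonneg u

private lemma sigma_pos {s : ℝ} (hs : 0 < s) : 0 < sigmaFun s := by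
  refine intervalIntegral.intervalIntegral_pos_of_pos_on
    (Real.smoothTransition.continuous.intervalIntegrable 0 s)
    (fun u hu => Real.smoothTransition.pos_of_pos hu.1) hs

private lemma chi_zero_of_nonpos {t : ℝ} (ht : t ≤ 0) : chiFun t = 0 := by
  unfold chiFun
  rw [intervalIntegral.integral_symm]
  have : Set.EqOn sigmaFun (fun _ => (0:ℝ)) (Set.uIcc t 0) := by
    intro u hu
    rw [Set.uIcc_of_le ht] at hu
    exact sigma_zero_of_nonpos hu.2
  rw [intervalIntegral.integral_congr this, intervalIntegral.integral_zero, neg_zero]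

private lemma chi_nonneg (t : ℝ) : 0 ≤ chiFun t := by
  rcases le_or_gt t 0 with h | h
  · rw [chi_zero_of_nonpos h]
  · exact intervalIntegral.integral_nonneg h.le fun u _ => sigma_nonneg u

private lemma chi_pos {t : ℝ} (ht : 0 < t) : 0 < chiFun t :=
  intervalIntegral.intervalIntegral_pos_of_pos_on
    (sigma_continuous.intervalIntegrable 0 t) (fun u hu => sigma_pos hu.1) ht

private lemma sigma_contDiff : ContDiff ℝ (⊤ : ℕ∞) sigmaFun := by
  rw [contDiff_infty_iff_deriv]
  refine ⟨fun s => (sigma_hasDerivAt s).differentiableAt, ?_⟩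
  have : deriv sigmaFun = Real.smoothTransition := funext fun s => (sigma_hasDerivAt s).deriv
  rw [this]
  exact Real.smoothTransition.contDiff

private lemma chi_contDiff : ContDiff ℝ (⊤ : ℕ∞) chiFun := by
  rw [contDiff_infty_iff_deriv]
  refine ⟨fun t => (chi_hasDerivAt t).differentiableAt, ?_⟩
  have : deriv chiFun = sigmaFun := funext fun t => (chi_hasDerivAt t).deriv
  rw [this]
  exact sigma_contDiff


private lemma second_deriv_comp (ψ ψd ψdd : ℝ → ℝ)
    (hψ : ∀ t, HasDerivAt ψ (ψd t) t) (hψd : ∀ t, HasDerivAt ψd (ψdd t) t)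
    {X : Set V} (hX : IsOpen X) {f : V → ℝ} (hf : ContDiffOn ℝ (⊤ : ℕ∞) f X)
    {x : V} (hx : x ∈ X) (e : V) :
    iteratedFDeriv ℝ 2 (fun y => ψ (f y)) x ![e, e] =
      ψdd (f x) * (fderiv ℝ f x e) ^ 2 +
      ψd (f x) * iteratedFDeriv ℝ 2 f x ![e, e] := by
  have hXf : ∀ y ∈ X, ContDiffAt ℝ (⊤ : ℕ∞) f y := fun y hy => hf.contDiffAt (hX.mem_nhds hy)
  have hdf : ∀ y ∈ X, HasFDerivAt f (fderiv ℝ f y) y := fun y hy =>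
    ((hXf y hy).differentiableAt (by simp)).hasFDerivAt
  have h1 : ∀ y ∈ X, HasFDerivAt (fun z => ψ (f z)) (ψd (f y) • fderiv ℝ f y) y := fun y hy =>
    (hψ (f y)).comp_hasFDerivAt y (hdf y hy)
  have heq : (fderiv ℝ (fun z => ψ (f z))) =ᶠ[nhds x] fun y => ψd (f y) • fderiv ℝ f y := by
    filter_upwards [hX.mem_nhds hx] with y hy using (h1 y hy).fderiv
  have hc : HasFDerivAt (fun z => ψd (f z)) (ψdd (f x) • fderiv ℝ f x) x :=
    (hψd (f x)).comp_hasFDerivAt x (hdf x hx)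
  have hF : HasFDerivAt (fderiv ℝ f) (fderiv ℝ (fderiv ℝ f) x) x :=
    (((hXf x hx).fderiv_right (m := (⊤ : ℕ∞)) (by norm_cast)).differentiableAt (by simp)).hasFDerivAt
  have h2 : HasFDerivAt (fun y => ψd (f y) • fderiv ℝ f y)
      (ψd (f x) • fderiv ℝ (fderiv ℝ f) x +
        (ψdd (f x) • fderiv ℝ f x).smulRight (fderiv ℝ f x)) x := hc.smul hF
  have h3 : fderiv ℝ (fderiv ℝ (fun z => ψ (f z))) x
      = ψd (f x) • fderiv ℝ (fderiv ℝ f) x +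
        (ψdd (f x) • fderiv ℝ f x).smulRight (fderiv ℝ f x) := by
    rw [heq.fderiv_eq]; exact h2.fderiv
  rw [iteratedFDeriv_two_apply, iteratedFDeriv_two_apply, h3]
  simp only [Matrix.cons_val_zero, Matrix.cons_val_one, Matrix.head_cons,
    ContinuousLinearMap.add_apply, ContinuousLinearMap.smul_apply,
    ContinuousLinearMap.smulRight_apply, smul_eq_mul]
  ring

theorem not_mem_pshHull_iff {p : ℕ} (hp : 1 ≤ p)
    (φ : V [⋀^Fin p]→ₗ[ℝ] ℝ)
    (hcomass : ∀ e : Fin p → V, Orthonormal ℝ e → φ e ≤ 1)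
    (X : Set V) (hX : IsOpen X) (K : Set V) (hK : IsCompact K) (hKne : K.Nonempty)
    (hKX : K ⊆ X) (x : V) (hx : x ∈ X) :
    x ∉ pshHull φ X K ↔
      ∃ f : V → ℝ, ContDiffOn ℝ (⊤ : ℕ∞) f X ∧ IsPSH φ X f ∧ (∀ y ∈ X, 0 ≤ f y) ∧
        (∃ N : Set V, IsOpen N ∧ K ⊆ N ∧ ∀ y ∈ N ∩ X, f y = 0) ∧ 0 < f x := by
  constructor
  · intro h
    simp only [pshHull, Set.mem_setOf_eq, not_and, not_forall, not_le] at h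
    obtain ⟨f, hf₁, hf₂, hfx⟩ := h hx
    set M := sSup (f '' K) with hM
    set c := (M + f x) / 2 with hc
    have hMc : M < c := by rw [hc]; linarith
    have hcfx : c < f x := by rw [hc]; linarith
    -- the composing function and its derivatives
    have hψ : ∀ t : ℝ, HasDerivAt (fun t => chiFun (t - c)) (sigmaFun (t - c)) t := by
      intro t
      simpa [Function.comp_def] using (chi_hasDerivAt (t - c)).comp t ((hasDerivAt_id t).sub_const c)
    have hψd : ∀ t : ℝ, HasDerivAt (fun t => sigmaFun (t - c))
        (Real.smoothTransition (t - c)) t := by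
      intro t
      simpa [Function.comp_def] using (sigma_hasDerivAt (t - c)).comp t ((hasDerivAt_id t).sub_const c)
    refine ⟨fun y => chiFun (f y - c), ?_, ?_, ?_, ?_, ?_⟩
    · exact (chi_contDiff.comp (contDiff_id.sub contDiff_const)).comp_contDiffOn hf₁
    · intro y hy e he heφ
      have key : ∀ j : Fin p,
          iteratedFDeriv ℝ 2 (fun z => chiFun (f z - c)) y ![e j, e j] =
            Real.smoothTransition (f y - c) * (fderiv ℝ f y (e j)) ^ 2 +
            sigmaFun (f y - c) * iteratedFDeriv ℝ 2 f y ![e j, e j] := fun j =>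
        second_deriv_comp (fun t => chiFun (t - c)) (fun t => sigmaFun (t - c))
          (fun t => Real.smoothTransition (t - c)) hψ hψd hX hf₁ hy (e j)
      calc (0:ℝ) ≤ Real.smoothTransition (f y - c) * ∑ j, (fderiv ℝ f y (e j)) ^ 2 +
            sigmaFun (f y - c) * ∑ j, iteratedFDeriv ℝ 2 f y ![e j, e j] := by
            refine add_nonneg (mul_nonneg (Real.smoothTransition.nonneg _)
              (Finset.sum_nonneg fun j _ => sq_nonneg _))
              (mul_nonneg (sigma_nonneg _) (hf₂ y hy e he heφ))
        _ = ∑ j, iteratedFDeriv ℝ 2 (fun z => chiFun (f z - c)) y ![e j, e j] := by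
            simp only [key, Finset.sum_add_distrib, Finset.mul_sum]
    · exact fun y _ => chi_nonneg _
    · refine ⟨X ∩ f ⁻¹' Set.Iio c, hf₁.continuousOn.isOpen_inter_preimage hX isOpen_Iio,
        ?_, ?_⟩
      · intro y hy
        have hfy : f y ≤ M :=
          le_csSup (hK.image_of_continuousOn (hf₁.continuousOn.mono hKX)).bddAbove
            (Set.mem_image_of_mem f hy)
        exact ⟨hKX hy, lt_of_le_of_lt hfy hMc⟩
      · intro y hy
        exact chi_zero_of_nonpos (by have : f y < c := hy.1.2; simp at this ⊢; linarith)
    · exact chi_pos (by linarith)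
  · rintro ⟨f, hf₁, hf₂, hnn, ⟨N, hNopen, hKN, hN0⟩, hfx⟩ hmem
    have hle := hmem.2 f hf₁ hf₂
    have himg : f '' K = {0} := by
      apply Set.eq_singleton_iff_nonempty_unique_mem.mpr
      refine ⟨hKne.image f, ?_⟩
      rintro z ⟨y, hy, rfl⟩
      exact hN0 y ⟨hKN hy, hKX hy⟩
    rw [himg, csSup_singleton] at hle
    linarith
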